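/- Under the setting of the previous statement (Gaussian X with partially separable covariance), define edge sets E and E_l on vertex set V = {1,…,p} by: (j,k) ∉ E iff the conditional covariance kernel C_jk ≡ 0, and (j,k) ∉ E_l iff (Σ_l^{-1})_{jk} = 0. Then E = ⋃_{l=1}^∞ E_l. -/

import Mathlib

lemma diag_pos {n : Type*} [Fintype n] [DecidableEq n] {A : Matrix n n ℝ}
    (hA : A.PosDef) (j : n) : 0 < A j j := by
  have := hA.dotProduct_mulVec_pos (x := Pi.single j 1) (by simp [Function.ne_iff])
  simpa [Matrix.mulVec_single, single_dotProduct] using this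

lemma minor_pos {n : Type*} [Fintype n] [DecidableEq n] {A : Matrix n n ℝ}
    (hA : A.PosDef) {j k : n} (hjk : j ≠ k) :
    0 < A j j * A k k - (A j k) ^ 2 := by
  have hjj := diag_pos hA j
  set x : n → ℝ := Pi.single j (A j k) + Pi.single k (-(A j j)) with hx
  have hxne : x ≠ 0 := by
    intro h
    have : x k = 0 := by rw [h]; rfl
    simp [hx, Pi.single_eq_of_ne (Ne.symm hjk)] at this
    linarith
  have hq := hA.dotProduct_mulVec_pos hxne
  have hsym : A k j = A j k := by
    have h1 := congrFun (congrFun hA.isHermitian.eq j) k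
    simpa [Matrix.conjTranspose_apply] using h1
  have hcalc : dotProduct (star x) (A.mulVec x)
      = A j j * (A j j * A k k - A j k ^ 2) := by
    simp only [hx, star_trivial, Matrix.mulVec_add, dotProduct_add,
      add_dotProduct, Matrix.mulVec_single, single_dotProduct]
    simp [hsym]
    ring
  rw [hcalc] at hq
  nlinarith

/-- Under the partially separable Gaussian setting, with
`C_jk = ∑_l σ̃_{ljk} φ_l ⊗ φ_l` (here `Φ l` represents the orthonormal kernel
`φ_l ⊗ φ_l` and `σ̃_{ljk} = −ω_{ljk}/(ω_{ljj}ω_{lkk} − ω_{ljk}²)`, `Ω_l = Σ_l⁻¹`),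
the edge sets `E` (`(j,k) ∈ E ↔ C_jk ≢ 0`) and `E_l` (`(j,k) ∈ E_l ↔ (Σ_l⁻¹)_{jk} ≠ 0`)
satisfy `E = ⋃_l E_l`. -/
theorem stmt11 (p : ℕ) {K : Type*} [NormedAddCommGroup K] [InnerProductSpace ℝ K]
    [CompleteSpace K]
    (Φ : ℕ → K) (hΦ : Orthonormal ℝ Φ)
    (M : ℕ → Matrix (Fin p) (Fin p) ℝ) (hM : ∀ l, (M l).PosDef)
    (σt : ℕ → Fin p → Fin p → ℝ)
    (hσt : ∀ l j k, σt l j k =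
      -((M l)⁻¹ j k) / ((M l)⁻¹ j j * (M l)⁻¹ k k - ((M l)⁻¹ j k) ^ 2))
    (hsum : ∀ j k : Fin p, Summable fun l => σt l j k • Φ l) :
    ∀ j k : Fin p, j ≠ k →
      ((∑' l, σt l j k • Φ l) ≠ 0 ↔ ∃ l, (M l)⁻¹ j k ≠ 0) := by
  intro j k hjk
  have hcoef : ∀ l, σt l j k ≠ 0 ↔ (M l)⁻¹ j k ≠ 0 := by
    intro l
    have hpos := minor_pos ((hM l).inv) hjk
    rw [hσt l j k]
    constructor
    · intro h h0
      exact h (by rw [h0]; simp)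
    · intro h
      exact div_ne_zero (neg_ne_zero.mpr h) (ne_of_gt hpos)
  have hinner : ∀ l, inner ℝ (Φ l) (∑' m, σt m j k • Φ m) = σt l j k := by
    intro l
    have := (innerSL ℝ (Φ l)).map_tsum (hsum j k)
    rw [show (inner ℝ (Φ l) (∑' m, σt m j k • Φ m) : ℝ) = (innerSL ℝ (Φ l)) (∑' m, σt m j k • Φ m) from rfl, this]
    have heq : (fun m => (innerSL ℝ (Φ l)) (σt m j k • Φ m))
        = fun m => if m = l then σt l j k else 0 := by
      funext m
      by_cases hm : m = l
      · subst hm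
        simp [real_inner_smul_right, real_inner_self_eq_norm_sq, hΦ.1 m]
      · simp only [innerSL_apply_apply, real_inner_smul_right, if_neg hm]
        rw [hΦ.2 (fun h : l = m => hm h.symm), mul_zero]
    rw [heq, tsum_ite_eq]
  constructor
  · intro hne
    by_contra hall
    push_neg at hall
    apply hne
    have : ∀ l, σt l j k • Φ l = 0 := by
      intro l
      have : σt l j k = 0 := by
        by_contra h
        exact (hcoef l).mp h (hall l)
      simp [this]
    simp [this]
  · rintro ⟨l, hl⟩ h0
    have := hinner l
    rw [h0, inner_zero_right] at this
    exact (hcoef l).mpr hl this.symm
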